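/- Tracing out n−m qubits from the n-qubit Dicke state |D_k^n⟩ yields the diagonal mixture Tr_{n-m}(|D_k^n⟩⟨D_k^n|) = (n choose k)^{-1} Σ_{α} (m choose α)(n−m choose k−α) |D_α^m⟩⟨D_α^m|, where the sum runs over α with max(0, k−(n−m)) ≤ α ≤ min(m, k); in particular this is a valid density matrix since Σ_α (m choose α)(n−m choose k−α) = (n choose k). -/

import Mathlib

open Finset

/-- The `n`-qubit Dicke state with `k` excitations, as a function `{0,1}^n → ℂ`. -/
noncomputable def dickeVec (n k : ℕ) : (Fin n → Fin 2) → ℂ := fun i =>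
  if (Finset.univ.filter fun p => i p = 1).card = k
    then ((Real.sqrt (n.choose k) : ℂ))⁻¹ else 0

/-- The rank-one projector `|D_k^n⟩⟨D_k^n|` as a matrix. -/
noncomputable def dickeProj (n k : ℕ) :
    Matrix (Fin n → Fin 2) (Fin n → Fin 2) ℂ := fun a b =>
  dickeVec n k a * star (dickeVec n k b)

def wt {n : ℕ} (v : Fin n → Fin 2) : ℕ := (Finset.univ.filter fun p => v p = 1).card

lemma wt_le {n : ℕ} (v : Fin n → Fin 2) : wt v ≤ n := by
  simpa [wt] using (Finset.card_filter_le univ fun p => v p = 1)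

lemma wt_append {m r : ℕ} (a : Fin m → Fin 2) (c : Fin r → Fin 2) :
    wt (Fin.append a c) = wt a + wt c := by
  unfold wt
  simp only [Finset.card_filter]
  rw [Fin.sum_univ_add]
  simp [Fin.append_left, Fin.append_right]

lemma card_wt (r j : ℕ) :
    (univ.filter fun c : Fin r → Fin 2 => wt c = j).card = r.choose j := by
  have h : r.choose j = ((univ : Finset (Fin r)).powersetCard j).card := by
    rw [Finset.card_powersetCard, card_univ, Fintype.card_fin]
  rw [h]
  apply Finset.card_nbij' (fun c => univ.filter fun p => c p = 1)
    (fun s p => if p ∈ s then 1 else 0)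
  · intro c hc
    simp only [Finset.mem_coe, mem_filter, mem_univ, true_and] at hc
    simp only [Finset.mem_coe, Finset.mem_powersetCard]
    exact ⟨Finset.subset_univ _, hc⟩
  · intro s hs
    simp only [Finset.mem_coe, Finset.mem_powersetCard] at hs
    rw [Finset.mem_coe, mem_filter]
    simp only [Finset.mem_coe, mem_filter, mem_univ, true_and, wt]
    rw [← hs.2]
    congr 1
    ext p
    simp only [mem_filter, mem_univ, true_and]
    constructor
    · intro hp; by_contra h'; simp [h'] at hp
    · intro hp; simp [hp]
  · intro c _
    funext p
    have h2 : ∀ x : Fin 2, x = 1 ∨ x = 0 := by decide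
    rcases h2 (c p) with h | h <;> simp [h]
  · intro s _
    ext p
    simp only [mem_filter, mem_univ, true_and]
    constructor
    · intro hp; by_contra h'; simp [h'] at hp
    · intro hp; simp [hp]

lemma inv_sqrt_mul_star (x : ℕ) :
    ((Real.sqrt x : ℂ))⁻¹ * star ((Real.sqrt x : ℂ))⁻¹ = ((x : ℂ))⁻¹ := by
  rw [Complex.star_def, ← Complex.ofReal_inv, Complex.conj_ofReal, ← Complex.ofReal_mul,
    ← mul_inv, Real.mul_self_sqrt (Nat.cast_nonneg x), Complex.ofReal_inv,
    Complex.ofReal_natCast]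

lemma dickeVec_eq (n k : ℕ) (v : Fin n → Fin 2) :
    dickeVec n k v = if wt v = k then ((Real.sqrt (n.choose k) : ℂ))⁻¹ else 0 := rfl

/-- Tracing out the last `r = n - m` qubits of the `n`-qubit Dicke state (`n = m + r`)
yields the diagonal mixture
`(n choose k)⁻¹ Σ_{max(0,k-r) ≤ α ≤ min(m,k)} (m choose α)(r choose k-α) |D_α^m⟩⟨D_α^m|`,
and the weights sum to `(n choose k)` (Vandermonde), so the result has unit trace. -/
theorem stmt_6 (m r k : ℕ) (hk : k ≤ m + r) :
    ((fun a b => ∑ c : Fin r → Fin 2,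
        dickeProj (m + r) k (Fin.append a c) (Fin.append b c))
      = fun (a b : Fin m → Fin 2) =>
          (((m + r).choose k : ℂ))⁻¹ *
            ∑ α ∈ Finset.Icc (k - r) (min m k),
              ((m.choose α : ℂ) * ((r.choose (k - α) : ℂ))) * dickeProj m α a b)
    ∧ ∑ α ∈ Finset.Icc (k - r) (min m k),
        m.choose α * r.choose (k - α) = (m + r).choose k := by
  constructor
  · funext a b
    simp only [dickeProj, dickeVec_eq, wt_append]
    by_cases hab : wt a = wt b
    · -- equal weights
      set α := wt a with hα
      rw [← hab]
      -- LHS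
      have hL : ∑ c : Fin r → Fin 2,
          (if α + wt c = k then ((Real.sqrt ((m+r).choose k) : ℂ))⁻¹ else 0) *
            star (if α + wt c = k then ((Real.sqrt ((m+r).choose k) : ℂ))⁻¹ else 0)
          = (if α ≤ k then (r.choose (k - α) : ℂ) else 0) * (((m+r).choose k : ℂ))⁻¹ := by
        have step : ∀ c : Fin r → Fin 2,
            (if α + wt c = k then ((Real.sqrt ((m+r).choose k) : ℂ))⁻¹ else 0) *
              star (if α + wt c = k then ((Real.sqrt ((m+r).choose k) : ℂ))⁻¹ else 0)
            = if α ≤ k ∧ wt c = k - α then (((m+r).choose k : ℂ))⁻¹ else 0 := by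
          intro c
          by_cases h : α + wt c = k
          · rw [if_pos h, if_pos ⟨by omega, by omega⟩, inv_sqrt_mul_star]
          · rw [if_neg h, if_neg (by omega), zero_mul]
        rw [Finset.sum_congr rfl fun c _ => step c]
        by_cases hαk : α ≤ k
        · simp only [hαk, true_and, if_true]
          rw [← Finset.sum_filter, Finset.sum_const, card_wt, nsmul_eq_mul]
        · simp [hαk]
      rw [hL]
      -- RHS
      have hm : α ≤ m := wt_le a
      have step2 : ∀ β ∈ Finset.Icc (k - r) (min m k),
          ((m.choose β : ℂ) * ((r.choose (k - β) : ℂ))) *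
            ((if α = β then ((Real.sqrt (m.choose β) : ℂ))⁻¹ else 0) *
              star (if α = β then ((Real.sqrt (m.choose β) : ℂ))⁻¹ else 0))
          = if β = α then (r.choose (k - α) : ℂ) else 0 := by
        intro β hβ
        by_cases h : α = β
        · subst h
          rw [if_pos rfl, inv_sqrt_mul_star]
          have hne : (m.choose α : ℂ) ≠ 0 := Nat.cast_ne_zero.mpr (Nat.choose_pos hm).ne'
          field_simp
          simp
        · rw [if_neg h, if_neg (fun h' => h h'.symm)]
          simp
      rw [Finset.sum_congr rfl step2, Finset.sum_ite_eq' _ α]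
      by_cases hαk : α ≤ k
      · rw [if_pos hαk]
        by_cases hmem : α ∈ Finset.Icc (k - r) (min m k)
        · rw [if_pos hmem]; ring
        · rw [if_neg hmem, mul_zero]
          simp only [Finset.mem_Icc, not_and_or, not_le] at hmem
          have : r < k - α := by omega
          rw [Nat.choose_eq_zero_of_lt this]
          simp
      · rw [if_neg hαk, if_neg (by simp only [Finset.mem_Icc]; omega), mul_zero, zero_mul]
    · rw [Finset.sum_eq_zero (fun c _ => by
          by_cases h1 : wt a + wt c = k
          · rw [if_pos h1, if_neg (fun h2 => hab (by omega)), star_zero, mul_zero]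
          · rw [if_neg h1, zero_mul]),
        Finset.sum_eq_zero (fun β _ => by
          by_cases h1 : wt a = β
          · rw [if_pos h1, if_neg (fun h2 => hab (h1.trans h2.symm)), star_zero, mul_zero, mul_zero]
          · rw [if_neg h1, zero_mul, mul_zero]),
        mul_zero]
  · have hv : (m + r).choose k = ∑ i ∈ Finset.range (k+1), m.choose i * r.choose (k - i) := by
      rw [Nat.add_choose_eq, Finset.Nat.sum_antidiagonal_eq_sum_range_succ_mk]
    rw [hv]
    apply Finset.sum_subset
    · intro x hx
      simp only [Finset.mem_Icc] at hx
      simp only [Finset.mem_range]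
      omega
    · intro x hx hx'
      simp only [Finset.mem_range] at hx
      simp only [Finset.mem_Icc, not_and_or, not_le] at hx'
      rcases hx' with h | h
      · rw [Nat.choose_eq_zero_of_lt (by omega : r < k - x), mul_zero]
      · rw [Nat.choose_eq_zero_of_lt (by omega : m < x), zero_mul]
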